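/- Let H ∈ [0, 1/2), set R := artanh(2H), let C > 1, and define g_C : ℝ → ℝ by g_C(s) = (2H·sinh s + C·√(1−4H²))/cosh s and M_C := R + arcosh(C). Then for every s₀ > M_C, the function t ↦ g_C(t)/√(1 − g_C(t)²) is integrable on the interval (M_C, s₀); that is, the improper integral ∫_{M_C}^{s₀} g_C(t)/√(1 − g_C(t)²) dt converges, even though the integrand tends to +∞ as t → M_C⁺. -/

import Mathlib

open Real MeasureTheory

/-- The inverse hyperbolic tangent. -/
noncomputable def artanh (x : ℝ) : ℝ := Real.log ((1 + x) / (1 - x)) / 2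

/-- The inverse hyperbolic cosine (on `[1, ∞)`). -/
noncomputable def arcosh (x : ℝ) : ℝ := Real.log (x + Real.sqrt (x ^ 2 - 1))

lemma cosh_sinh_artanh (p : ℝ) (h0 : 0 ≤ p) (h1 : p < 1) :
    Real.cosh (_root_.artanh p) = 1 / Real.sqrt (1 - p ^ 2) ∧
    Real.sinh (_root_.artanh p) = p / Real.sqrt (1 - p ^ 2) := by
  have hp1 : (0:ℝ) < 1 - p := by linarith
  have hu : (0:ℝ) < (1 + p) / (1 - p) := by positivity
  set u := (1 + p) / (1 - p) with hu_def
  set e := Real.exp (Real.log u / 2) with he_def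
  have he : 0 < e := Real.exp_pos _
  have he2 : e * e = u := by
    rw [he_def, ← Real.exp_add]
    rw [show Real.log u / 2 + Real.log u / 2 = Real.log u by ring]
    exact Real.exp_log hu
  have hkey : e * e * (1 - p) = 1 + p := by
    rw [he2, hu_def]; field_simp
  have hsqrt : Real.sqrt (1 - p ^ 2) = (1 - p) * e := by
    rw [show 1 - p ^ 2 = ((1 - p) * e) ^ 2 by nlinarith [hkey]]
    exact Real.sqrt_sq (by positivity)
  have hRe : _root_.artanh p = Real.log u / 2 := rfl
  constructor
  · rw [hRe, Real.cosh_eq, ← he_def, Real.exp_neg, ← he_def, hsqrt]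
    field_simp
    nlinarith [hkey]
  · rw [hRe, Real.sinh_eq, ← he_def, Real.exp_neg, ← he_def, hsqrt]
    field_simp
    nlinarith [hkey]

lemma cosh_sinh_arcosh (C : ℝ) (hC : 1 < C) :
    Real.cosh (_root_.arcosh C) = C ∧ Real.sinh (_root_.arcosh C) = Real.sqrt (C ^ 2 - 1) ∧
    0 < _root_.arcosh C := by
  set s := Real.sqrt (C ^ 2 - 1) with hs_def
  have hs0 : 0 ≤ s := Real.sqrt_nonneg _
  have hs2 : s ^ 2 = C ^ 2 - 1 := Real.sq_sqrt (by nlinarith)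
  have hy : (1:ℝ) < C + s := by linarith
  have hy0 : (0:ℝ) < C + s := by linarith
  have hinv : (C + s)⁻¹ = C - s := by
    have h : (C + s) * (C - s) = 1 := by nlinarith
    field_simp
    linarith [h]
  have hA : _root_.arcosh C = Real.log (C + s) := rfl
  refine ⟨?_, ?_, ?_⟩
  · rw [hA, Real.cosh_eq, Real.exp_log hy0, Real.exp_neg, Real.exp_log hy0, hinv]; ring
  · rw [hA, Real.sinh_eq, Real.exp_log hy0, Real.exp_neg, Real.exp_log hy0, hinv]; ring
  · rw [hA]; exact Real.log_pos hy

/-- For `H ∈ [0, 1/2)`, `R = artanh(2H)`, `C > 1`,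
`g_C(s) = (2H·sinh s + C·√(1−4H²))/cosh s` and `M_C = R + arcosh C`,
the function `t ↦ g_C(t)/√(1 − g_C(t)²)` is integrable on `(M_C, s₀)` for every
`s₀ > M_C`, i.e. the improper integral `∫_{M_C}^{s₀} g_C/√(1−g_C²)` converges. -/
theorem gC_integrable_near_MC
    (H : ℝ) (hH0 : 0 ≤ H) (hH : H < 1 / 2) (R : ℝ) (hR : R = _root_.artanh (2 * H))
    (C : ℝ) (hC : 1 < C) (g : ℝ → ℝ)
    (hg : ∀ s : ℝ, g s = (2 * H * Real.sinh s + C * Real.sqrt (1 - 4 * H ^ 2)) / Real.cosh s)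
    (M : ℝ) (hM : M = R + _root_.arcosh C) :
    ∀ s₀ : ℝ, M < s₀ →
      IntegrableOn (fun t : ℝ => g t / Real.sqrt (1 - g t ^ 2)) (Set.Ioo M s₀) := by
  intro s₀ hs₀
  set p := 2 * H with hp_def
  have h0p : 0 ≤ p := by positivity
  have h1p : p < 1 := by rw [hp_def]; linarith
  obtain ⟨hcR, hsR⟩ := cosh_sinh_artanh p h0p h1p
  rw [← hR] at hcR hsR
  set q := Real.sqrt (1 - p ^ 2) with hq_def
  have hq : 0 < q := Real.sqrt_pos.mpr (by nlinarith)
  obtain ⟨hcA, hsA, hApos⟩ := cosh_sinh_arcosh C hC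
  set A := _root_.arcosh C with hA_def
  set sC := Real.sqrt (C ^ 2 - 1) with hsC_def
  have hsC : 0 < sC := Real.sqrt_pos.mpr (by nlinarith)
  -- R ≥ 0
  have hR0 : 0 ≤ R := by
    rw [hR]
    have h1p' : (0:ℝ) < 1 - p := by linarith
    have : (1:ℝ) ≤ (1 + p) / (1 - p) := by
      rw [le_div_iff₀ h1p']; linarith
    have := Real.log_nonneg this
    unfold _root_.artanh
    linarith
  have hM0 : 0 < M := by rw [hM]; linarith
  -- rewrite g
  have h14 : 1 - 4 * H ^ 2 = 1 - p ^ 2 := by rw [hp_def]; ring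
  have hgt : ∀ t, g t = (p * Real.sinh t + C * q) / Real.cosh t := by
    intro t; rw [hg t, h14]
  -- the constant in the lower bound
  set c := q * sC / Real.cosh s₀ with hc_def
  have hc : 0 < c := by
    apply div_pos (mul_pos hq hsC) (Real.cosh_pos s₀)
  -- pointwise facts on the interval
  have hfacts : ∀ t ∈ Set.Ioo M s₀,
      c * (t - M) ≤ 1 - g t ∧ 0 ≤ g t := by
    intro t ht
    obtain ⟨htM, hts⟩ := ht
    have ht0 : 0 < t := lt_trans hM0 htM
    have hct : 0 < Real.cosh t := Real.cosh_pos t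
    have h1g : (1 - g t) * Real.cosh t = q * (Real.cosh (t - R) - C) := by
      rw [hgt t, Real.cosh_sub, hcR, hsR]
      field_simp
      ring
    have hlb : sC * (t - M) ≤ Real.cosh (t - R) - C := by
      have htR : t - R = (t - M) + A := by rw [hM]; ring
      rw [htR, Real.cosh_add, hcA, hsA]
      have h1 : (1:ℝ) ≤ Real.cosh (t - M) := Real.one_le_cosh _
      have h2 : t - M ≤ Real.sinh (t - M) := Real.self_le_sinh_iff.mpr (by linarith)
      nlinarith
    have hcs : Real.cosh t ≤ Real.cosh s₀ := by
      rw [Real.cosh_le_cosh]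
      rw [abs_of_pos ht0, abs_of_pos (lt_trans ht0 hts)]
      exact le_of_lt hts
    have htMpos : 0 < t - M := by linarith
    have h1gnn : 0 ≤ 1 - g t := by
      nlinarith [mul_pos hsC htMpos]
    constructor
    · have step1 : q * (sC * (t - M)) ≤ q * (Real.cosh (t - R) - C) :=
        mul_le_mul_of_nonneg_left hlb hq.le
      have step2 : (1 - g t) * Real.cosh t ≤ (1 - g t) * Real.cosh s₀ :=
        mul_le_mul_of_nonneg_left hcs h1gnn
      have step3 : q * sC * (t - M) ≤ (1 - g t) * Real.cosh s₀ := by linarith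
      rw [hc_def, div_mul_eq_mul_div, div_le_iff₀ (Real.cosh_pos s₀)]
      linarith
    · rw [hgt t]
      have hst : 0 ≤ Real.sinh t := Real.sinh_nonneg_iff.mpr ht0.le
      exact div_nonneg (add_nonneg (mul_nonneg h0p hst) (by positivity)) hct.le
  -- continuity / measurability
  have hgfun : g = fun s => (2 * H * Real.sinh s + C * Real.sqrt (1 - 4 * H ^ 2)) / Real.cosh s :=
    funext hg
  have hcont : Continuous g := by
    rw [hgfun]
    exact ((continuous_const.mul Real.continuous_sinh).add continuous_const).div
      Real.continuous_cosh (fun x => (Real.cosh_pos x).ne')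
  have hmeasf : AEStronglyMeasurable (fun t : ℝ => g t / Real.sqrt (1 - g t ^ 2))
      (volume.restrict (Set.Ioo M s₀)) := by
    apply Measurable.aestronglyMeasurable
    exact hcont.measurable.div
      ((Real.continuous_sqrt.comp (continuous_const.sub (hcont.pow 2))).measurable)
  -- integrable dominating function
  have h0 : IntervalIntegrable (fun x : ℝ => x ^ (-(1/2) : ℝ)) volume 0 (s₀ - M) :=
    intervalIntegral.intervalIntegrable_rpow' (by norm_num)
  have h1 := h0.comp_sub_right M
  rw [zero_add, sub_add_cancel] at h1
  have hInt : IntegrableOn (fun x : ℝ => (x - M) ^ (-(1/2) : ℝ)) (Set.Ioo M s₀) volume :=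
    (h1.1).mono_set Set.Ioo_subset_Ioc_self
  have hIntB : IntegrableOn
      (fun t : ℝ => (Real.sqrt c)⁻¹ * (t - M) ^ (-(1/2) : ℝ)) (Set.Ioo M s₀) volume :=
    hInt.const_mul _
  -- domination
  apply hIntB.integrable.mono' hmeasf
  rw [ae_restrict_iff' measurableSet_Ioo]
  filter_upwards with t ht
  obtain ⟨h1glb, hg0⟩ := hfacts t ht
  obtain ⟨htM, hts⟩ := ht
  have htMpos : 0 < t - M := by linarith
  have hctM : 0 < c * (t - M) := mul_pos hc htMpos
  have hg1 : g t ≤ 1 := by linarith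
  have h1g2 : c * (t - M) ≤ 1 - g t ^ 2 := by
    have hgg : 0 ≤ g t * (1 - g t) := mul_nonneg hg0 (by linarith)
    linarith [hgg]
  have hd : 0 < Real.sqrt (c * (t - M)) := Real.sqrt_pos.mpr hctM
  have hfle : g t / Real.sqrt (1 - g t ^ 2) ≤ 1 / Real.sqrt (c * (t - M)) :=
    div_le_div₀ zero_le_one hg1 hd (Real.sqrt_le_sqrt h1g2)
  have hfnn : 0 ≤ g t / Real.sqrt (1 - g t ^ 2) :=
    div_nonneg hg0 (Real.sqrt_nonneg _)
  rw [Real.norm_eq_abs, abs_of_nonneg hfnn]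
  calc g t / Real.sqrt (1 - g t ^ 2) ≤ 1 / Real.sqrt (c * (t - M)) := hfle
    _ = (Real.sqrt c)⁻¹ * (t - M) ^ (-(1/2) : ℝ) := by
        rw [Real.sqrt_mul hc.le, one_div, mul_inv,
          Real.rpow_neg htMpos.le, ← Real.sqrt_eq_rpow]
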